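/- Let 0 < ε ≤ 1/4, let m ≥ 1, A ∈ [0,1]^{m×n}, b ∈ [1,∞)^m, and W with W·A_{ij} ≤ b_i for all i, j, W ≥ 1/ε, and m ≤ e^{ε²W}. Let f : 2^[n] → ℝ₊ be a normalized monotone submodular set function and set λ = e^{εW}. Let ∅ = S_0 ⊂ S_1 ⊂ ⋯ ⊂ S_t ⊆ [n] be a chain with S_ℓ = S_{ℓ−1} ∪ {γ_ℓ}, γ_ℓ ∉ S_{ℓ−1}, and define weights w_{iℓ} = (1/b_i)·λ^{(Σ_{j∈S_ℓ} A_{ij})/b_i}. Assume for every ℓ ∈ {1,…,t}: (i) δ_ℓ := f(S_ℓ) − f(S_{ℓ−1}) > 0, and (ii) f_{S_{ℓ−1}}(j) · Σ_{i=1}^m A_{iγ_ℓ} w_{i(ℓ−1)} ≤ δ_ℓ · Σ_{i=1}^m A_{ij} w_{i(ℓ−1)} for every j ∈ [n]∖S_{ℓ−1}. Let S* ⊆ [n] be feasible (Σ_{j∈S*} A_{ij} ≤ b_i for all i) with f(S*) > f(S_t). If Σ_{i=1}^m b_i w_{it} ≥ e^{ε(W−1)}, then f(S_t) ≥ (1 −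 4ε)(1 − 1/e) · f(S*). -/

import Mathlib

lemma exp_chord_aux (p s : ℝ) (hs0 : 0 ≤ s) (hs1 : s ≤ 1) :
    Real.exp (s * p) ≤ 1 + s * (Real.exp p - 1) := by
  have h := convexOn_exp.2 (Set.mem_univ (0:ℝ)) (Set.mem_univ p)
    (by linarith : (0:ℝ) ≤ 1 - s) hs0 (by ring)
  simp only [smul_eq_mul, mul_zero, zero_add, Real.exp_zero, mul_one] at h
  linarith

lemma submod_sum_aux {n : ℕ} (f : Finset (Fin n) → ℝ)
    (hf_mono : ∀ S T : Finset (Fin n), S ⊆ T → f S ≤ f T)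
    (hf_submod : ∀ S T : Finset (Fin n), f (S ∪ T) + f (S ∩ T) ≤ f S + f T)
    (X B : Finset (Fin n)) :
    f (X ∪ B) - f X ≤ ∑ j ∈ B, (f (insert j X) - f X) := by
  induction B using Finset.induction_on with
  | empty => simp
  | @insert a B ha ih =>
    rw [Finset.sum_insert ha]
    have h1 := hf_submod (X ∪ B) (insert a X)
    have hu : (X ∪ B) ∪ insert a X = X ∪ insert a B := by
      ext x; simp; tauto
    have hi : X ⊆ (X ∪ B) ∩ insert a X := by
      intro x hx; simp [hx]
    have h2 := hf_mono _ _ hi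
    rw [hu] at h1
    linarith

set_option maxHeartbeats 1600000 in
theorem stmt_5 (m n t : ℕ) (hm : 1 ≤ m)
    (ε : ℝ) (hε0 : 0 < ε) (hε1 : ε ≤ 1 / 4)
    (A : Fin m → Fin n → ℝ) (hA : ∀ i j, 0 ≤ A i j ∧ A i j ≤ 1)
    (b : Fin m → ℝ) (hb : ∀ i, 1 ≤ b i)
    (W : ℝ) (hW : 1 / ε ≤ W) (hwidth : ∀ i j, W * A i j ≤ b i)
    (hmW : (m : ℝ) ≤ Real.exp (ε ^ 2 * W))
    (f : Finset (Fin n) → ℝ)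
    (hf_nonneg : ∀ S, 0 ≤ f S)
    (hf_norm : f ∅ = 0)
    (hf_mono : ∀ S T : Finset (Fin n), S ⊆ T → f S ≤ f T)
    (hf_submod : ∀ S T : Finset (Fin n), f (S ∪ T) + f (S ∩ T) ≤ f S + f T)
    (lam : ℝ) (hlam : lam = Real.exp (ε * W))
    (S : ℕ → Finset (Fin n)) (γ : ℕ → Fin n)
    (hS0 : S 0 = ∅)
    (hchain : ∀ ℓ, 1 ≤ ℓ → ℓ ≤ t →
      γ ℓ ∉ S (ℓ - 1) ∧ S ℓ = insert (γ ℓ) (S (ℓ - 1)))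
    (w : Fin m → ℕ → ℝ)
    (hw : ∀ i ℓ, w i ℓ = (1 / b i) * lam ^ ((∑ j ∈ S ℓ, A i j) / b i))
    (hδ : ∀ ℓ, 1 ≤ ℓ → ℓ ≤ t → 0 < f (S ℓ) - f (S (ℓ - 1)))
    (hgreedy : ∀ ℓ, 1 ≤ ℓ → ℓ ≤ t → ∀ j : Fin n, j ∉ S (ℓ - 1) →
      (f (insert j (S (ℓ - 1))) - f (S (ℓ - 1))) * ∑ i, A i (γ ℓ) * w i (ℓ - 1)
        ≤ (f (S ℓ) - f (S (ℓ - 1))) * ∑ i, A i j * w i (ℓ - 1))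
    (Sstar : Finset (Fin n))
    (hfeas : ∀ i, ∑ j ∈ Sstar, A i j ≤ b i)
    (hopt : f (S t) < f Sstar)
    (hterm : Real.exp (ε * (W - 1)) ≤ ∑ i, b i * w i t) :
    f (S t) ≥ (1 - 4 * ε) * (1 - 1 / Real.exp 1) * f Sstar := by
  have hWpos : 0 < W := lt_of_lt_of_le (by positivity) hW
  have hbpos : ∀ i, 0 < b i := fun i => lt_of_lt_of_le one_pos (hb i)
  set F := f Sstar with hF
  have hF0 : 0 < F := lt_of_le_of_lt (hf_nonneg (S t)) hopt
  set c := W * (Real.exp ε - 1) with hc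
  have hexpε : ε + 1 ≤ Real.exp ε := Real.add_one_le_exp ε
  have hcpos : 0 < c := mul_pos hWpos (by linarith)
  -- chain is increasing
  have hkey : ∀ d ℓ, ℓ + d ≤ t → S ℓ ⊆ S (ℓ + d) := by
    intro d
    induction d with
    | zero => intro ℓ _; exact subset_rfl
    | succ d ih =>
      intro ℓ hlt
      have h1 : S ℓ ⊆ S (ℓ + d) := ih ℓ (by omega)
      have h2 := (hchain (ℓ + d + 1) (by omega) (by omega)).2
      simp only [Nat.add_sub_cancel] at h2
      rw [show ℓ + (d + 1) = ℓ + d + 1 from rfl, h2]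
      exact h1.trans (Finset.subset_insert _ _)
  have hglt : ∀ ℓ, ℓ ≤ t → f (S ℓ) < F := by
    intro ℓ hℓ
    have := hkey (t - ℓ) ℓ (by omega)
    rw [show ℓ + (t - ℓ) = t by omega] at this
    exact lt_of_le_of_lt (hf_mono _ _ this) hopt
  have hwpos : ∀ i ℓ, 0 < w i ℓ := by
    intro i ℓ
    rw [hw, hlam]
    have := hbpos i
    positivity
  haveI : Nonempty (Fin m) := ⟨⟨0, hm⟩⟩
  -- main induction
  have main : ∀ ℓ, ℓ ≤ t →
      (∑ i, b i * w i ℓ) ≤ m * Real.exp (c * (Real.log F - Real.log (F - f (S ℓ)))) := by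
    intro ℓ
    induction ℓ with
    | zero =>
      intro _
      rw [hS0, hf_norm, sub_zero, sub_self, mul_zero, Real.exp_zero, mul_one]
      have : ∀ i : Fin m, b i * w i 0 = 1 := by
        intro i
        rw [hw, hS0]
        simp only [Finset.sum_empty, zero_div, Real.rpow_zero, mul_one]
        rw [mul_one_div, div_self (hbpos i).ne']
      rw [Finset.sum_congr rfl (fun i _ => this i)]
      simp
    | succ ℓ ih =>
      intro h
      have hlt : ℓ ≤ t := le_trans (Nat.le_succ ℓ) h
      have ihh := ih hlt
      have hch := hchain (ℓ + 1) (by omega) h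
      simp only [Nat.add_sub_cancel] at hch
      obtain ⟨hγ, hSins⟩ := hch
      have hδ' := hδ (ℓ + 1) (by omega) h
      simp only [Nat.add_sub_cancel] at hδ'
      set g := f (S ℓ) with hg
      set g' := f (S (ℓ + 1)) with hg'
      have hRpos : 0 < F - g := sub_pos.2 (hglt ℓ hlt)
      have hR'pos : 0 < F - g' := sub_pos.2 (hglt (ℓ + 1) h)
      set Φ := ∑ i, b i * w i ℓ with hΦ
      have hΦpos : 0 < Φ :=
        Finset.sum_pos (fun i _ => mul_pos (hbpos i) (hwpos i ℓ)) Finset.univ_nonempty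
      set T := ∑ i, A i (γ (ℓ + 1)) * w i ℓ with hT
      have hTnn : 0 ≤ T :=
        Finset.sum_nonneg fun i _ => mul_nonneg (hA _ _).1 (hwpos i ℓ).le
      -- Step 1 : Φ' ≤ Φ + c T
      have hstep1 : (∑ i, b i * w i (ℓ + 1)) ≤ Φ + c * T := by
        have hpt : ∀ i, b i * w i (ℓ + 1) ≤ b i * w i ℓ + c * (A i (γ (ℓ + 1)) * w i ℓ) := by
          intro i
          have hbi := hbpos i
          have hsum : (∑ j ∈ S (ℓ + 1), A i j) = A i (γ (ℓ + 1)) + ∑ j ∈ S ℓ, A i j := by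
            rw [hSins, Finset.sum_insert hγ]
          have hlam' : ∀ x : ℝ, lam ^ x = Real.exp (ε * W * x) := by
            intro x
            rw [hlam, Real.rpow_def_of_pos (Real.exp_pos _), Real.log_exp]
          have hrec : w i (ℓ + 1) = w i ℓ * Real.exp (ε * W * (A i (γ (ℓ + 1)) / b i)) := by
            rw [hw i (ℓ + 1), hw i ℓ, hsum, hlam', hlam']
            rw [show ε * W * ((A i (γ (ℓ + 1)) + ∑ j ∈ S ℓ, A i j) / b i)
                = ε * W * ((∑ j ∈ S ℓ, A i j) / b i) + ε * W * (A i (γ (ℓ + 1)) / b i)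
              by field_simp; ring]
            rw [Real.exp_add]; ring
          have hs0 : 0 ≤ W * A i (γ (ℓ + 1)) / b i :=
            div_nonneg (mul_nonneg hWpos.le (hA _ _).1) hbi.le
          have hs1 : W * A i (γ (ℓ + 1)) / b i ≤ 1 := (div_le_one hbi).2 (hwidth i _)
          have hkey2 : Real.exp (ε * W * (A i (γ (ℓ + 1)) / b i))
              ≤ 1 + c * (A i (γ (ℓ + 1)) / b i) := by
            have h1 := exp_chord_aux ε (W * A i (γ (ℓ + 1)) / b i) hs0 hs1
            rw [show W * A i (γ (ℓ + 1)) / b i * ε = ε * W * (A i (γ (ℓ + 1)) / b i) by ring]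
              at h1
            calc Real.exp (ε * W * (A i (γ (ℓ + 1)) / b i))
                ≤ 1 + W * A i (γ (ℓ + 1)) / b i * (Real.exp ε - 1) := h1
              _ = 1 + c * (A i (γ (ℓ + 1)) / b i) := by rw [hc]; ring
          have hwnn : 0 ≤ b i * w i ℓ := (mul_pos hbi (hwpos i ℓ)).le
          calc b i * w i (ℓ + 1)
              = (b i * w i ℓ) * Real.exp (ε * W * (A i (γ (ℓ + 1)) / b i)) := by
                rw [hrec]; ring
            _ ≤ (b i * w i ℓ) * (1 + c * (A i (γ (ℓ + 1)) / b i)) :=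
                mul_le_mul_of_nonneg_left hkey2 hwnn
            _ = b i * w i ℓ + c * (A i (γ (ℓ + 1)) * w i ℓ) := by
                field_simp
        calc (∑ i, b i * w i (ℓ + 1))
            ≤ ∑ i, (b i * w i ℓ + c * (A i (γ (ℓ + 1)) * w i ℓ)) :=
              Finset.sum_le_sum fun i _ => hpt i
          _ = Φ + c * T := by rw [Finset.sum_add_distrib, ← Finset.mul_sum]
      -- Step 2 : T ≤ (g' - g) Φ / (F - g)
      have hsumD : (∑ j ∈ Sstar \ S ℓ, (f (insert j (S ℓ)) - g)) * T ≤ (g' - g) * Φ := by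
        rw [Finset.sum_mul]
        have hper : ∀ j ∈ Sstar \ S ℓ,
            (f (insert j (S ℓ)) - g) * T ≤ (g' - g) * ∑ i, A i j * w i ℓ := by
          intro j hj
          have hjS : j ∉ S ℓ := (Finset.mem_sdiff.1 hj).2
          have := hgreedy (ℓ + 1) (by omega) h j (by simpa using hjS)
          simpa using this
        calc (∑ j ∈ Sstar \ S ℓ, (f (insert j (S ℓ)) - g) * T)
            ≤ ∑ j ∈ Sstar \ S ℓ, (g' - g) * ∑ i, A i j * w i ℓ :=
              Finset.sum_le_sum hper
          _ = (g' - g) * ∑ i, (∑ j ∈ Sstar \ S ℓ, A i j) * w i ℓ := by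
              rw [← Finset.mul_sum]
              congr 1
              rw [Finset.sum_comm]
              simp_rw [Finset.sum_mul]
          _ ≤ (g' - g) * Φ := by
              apply mul_le_mul_of_nonneg_left _ hδ'.le
              apply Finset.sum_le_sum
              intro i _
              have hA' : (∑ j ∈ Sstar \ S ℓ, A i j) ≤ b i := by
                refine le_trans ?_ (hfeas i)
                exact Finset.sum_le_sum_of_subset_of_nonneg (Finset.sdiff_subset)
                  (fun j _ _ => (hA i j).1)
              exact mul_le_mul_of_nonneg_right hA' (hwpos i ℓ).le
      have hM : F - g ≤ ∑ j ∈ Sstar \ S ℓ, (f (insert j (S ℓ)) - g) := by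
        have h1 := submod_sum_aux f hf_mono hf_submod (S ℓ) (Sstar \ S ℓ)
        have h2 : Sstar ⊆ S ℓ ∪ (Sstar \ S ℓ) := by
          intro x hx
          by_cases hxS : x ∈ S ℓ <;> simp [hx, hxS]
        have h3 := hf_mono _ _ h2
        rw [← hF, ← hg] at *
        linarith
      have hTb : T ≤ (g' - g) * Φ / (F - g) := by
        rw [le_div_iff₀ hRpos]
        have h1 := mul_le_mul_of_nonneg_right hM hTnn
        calc T * (F - g) = (F - g) * T := mul_comm _ _
          _ ≤ (∑ j ∈ Sstar \ S ℓ, (f (insert j (S ℓ)) - g)) * T := h1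
          _ ≤ (g' - g) * Φ := hsumD
      -- Step 3 : combine
      have hΦ' : (∑ i, b i * w i (ℓ + 1)) ≤ Φ * Real.exp (c * ((g' - g) / (F - g))) := by
        have h1 : Φ + c * T ≤ Φ + c * ((g' - g) * Φ / (F - g)) := by
          have := mul_le_mul_of_nonneg_left hTb hcpos.le
          linarith
        have h2 : Φ + c * ((g' - g) * Φ / (F - g)) = Φ * (1 + c * ((g' - g) / (F - g))) := by
          field_simp
        have h3 : 1 + c * ((g' - g) / (F - g)) ≤ Real.exp (c * ((g' - g) / (F - g))) := by
          have := Real.add_one_le_exp (c * ((g' - g) / (F - g)))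
          linarith
        calc (∑ i, b i * w i (ℓ + 1)) ≤ Φ + c * T := hstep1
          _ ≤ Φ * (1 + c * ((g' - g) / (F - g))) := by rw [← h2]; exact h1
          _ ≤ Φ * Real.exp (c * ((g' - g) / (F - g))) :=
              mul_le_mul_of_nonneg_left h3 hΦpos.le
      -- log estimate
      have hloga : (g' - g) / (F - g) ≤ Real.log (F - g) - Real.log (F - g') := by
        have hlog := Real.log_le_sub_one_of_pos (div_pos hR'pos hRpos)
        rw [Real.log_div hR'pos.ne' hRpos.ne'] at hlog
        have he : (g' - g) / (F - g) = 1 - (F - g') / (F - g) := by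
          field_simp; ring
        rw [he]
        linarith
      have hlogc : c * ((g' - g) / (F - g)) ≤ c * (Real.log (F - g) - Real.log (F - g')) :=
        mul_le_mul_of_nonneg_left hloga hcpos.le
      calc (∑ i, b i * w i (ℓ + 1))
          ≤ Φ * Real.exp (c * ((g' - g) / (F - g))) := hΦ'
        _ ≤ Φ * Real.exp (c * (Real.log (F - g) - Real.log (F - g'))) :=
            mul_le_mul_of_nonneg_left (Real.exp_le_exp.2 hlogc) hΦpos.le
        _ ≤ (m * Real.exp (c * (Real.log F - Real.log (F - g)))) *
              Real.exp (c * (Real.log (F - g) - Real.log (F - g'))) :=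
            mul_le_mul_of_nonneg_right ihh (Real.exp_pos _).le
        _ = m * Real.exp (c * (Real.log F - Real.log (F - g'))) := by
            rw [mul_assoc, ← Real.exp_add]
            ring_nf
  -- Final assembly
  set L := Real.log F - Real.log (F - f (S t)) with hL
  have hfinal : Real.exp (ε * (W - 1)) ≤ Real.exp (ε ^ 2 * W + c * L) := by
    calc Real.exp (ε * (W - 1)) ≤ ∑ i, b i * w i t := hterm
      _ ≤ m * Real.exp (c * L) := main t le_rfl
      _ ≤ Real.exp (ε ^ 2 * W) * Real.exp (c * L) :=
          mul_le_mul_of_nonneg_right hmW (Real.exp_pos _).le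
      _ = Real.exp (ε ^ 2 * W + c * L) := (Real.exp_add _ _).symm
  have hineq : ε * (W - 1) ≤ ε ^ 2 * W + c * L := Real.exp_le_exp.1 hfinal
  -- lower bound L
  have hεW : ε ≤ ε ^ 2 * W := by
    have h1 : 1 ≤ ε * W := by
      rw [div_le_iff₀ hε0] at hW
      linarith [hW]
    nlinarith
  have hexp2 : (1 - ε) * Real.exp ε ≤ 1 := by
    have h1 : 1 - ε ≤ Real.exp (-ε) := by
      have := Real.add_one_le_exp (-ε); linarith
    have h2 := mul_le_mul_of_nonneg_right h1 (Real.exp_pos ε).le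
    rw [← Real.exp_add] at h2
    simpa using h2
  have hcL : c * ((1 - 2 * ε) * (1 - ε)) ≤ c * L := by
    have hq : (Real.exp ε - 1) * (1 - ε) ≤ ε := by nlinarith [hexp2]
    have hW2 : (0:ℝ) ≤ W * (1 - 2 * ε) := mul_nonneg hWpos.le (by linarith)
    have h3 := mul_le_mul_of_nonneg_left hq hW2
    have hub : c * ((1 - 2 * ε) * (1 - ε)) ≤ ε * (W - 1) - ε ^ 2 * W := by
      rw [hc]
      nlinarith [h3, hεW]
    linarith
  have hLlb : (1 - 2 * ε) * (1 - ε) ≤ L := le_of_mul_le_mul_left hcL hcpos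
  have hL3 : 1 - 3 * ε ≤ L := by nlinarith
  -- convert to bound on f (S t)
  have hRt : 0 < F - f (S t) := sub_pos.2 hopt
  have hlogF : Real.log (F - f (S t)) ≤ Real.log F - (1 - 3 * ε) := by
    rw [hL] at hL3; linarith
  have hmain2 : F - f (S t) ≤ F * Real.exp (3 * ε - 1) := by
    calc F - f (S t) = Real.exp (Real.log (F - f (S t))) := (Real.exp_log hRt).symm
      _ ≤ Real.exp (Real.log F + (3 * ε - 1)) := Real.exp_le_exp.2 (by linarith)
      _ = F * Real.exp (3 * ε - 1) := by rw [Real.exp_add, Real.exp_log hF0]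
  -- numeric: exp(3ε-1) ≤ (1 + 4ε(e-1))/e
  have hchord := exp_chord_aux (3 / 4 : ℝ) (4 * ε) (by linarith) (by linarith)
  rw [show (4 * ε) * (3 / 4 : ℝ) = 3 * ε by ring] at hchord
  have h34 : Real.exp (3 / 4 : ℝ) ≤ Real.exp 1 := Real.exp_le_exp.2 (by norm_num)
  have hnum : Real.exp (3 * ε) ≤ 1 + 4 * ε * (Real.exp 1 - 1) := by nlinarith
  have hexpsplit : Real.exp (3 * ε - 1) = Real.exp (3 * ε) / Real.exp 1 := by
    rw [Real.exp_sub]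
  have he1 : (0:ℝ) < Real.exp 1 := Real.exp_pos 1
  have hfin : F * Real.exp (3 * ε - 1) ≤ F * ((1 + 4 * ε * (Real.exp 1 - 1)) / Real.exp 1) := by
    apply mul_le_mul_of_nonneg_left _ hF0.le
    rw [hexpsplit]
    gcongr
  have halg : F * ((1 + 4 * ε * (Real.exp 1 - 1)) / Real.exp 1)
      = F - (1 - 4 * ε) * (1 - 1 / Real.exp 1) * F := by
    field_simp
    ring
  have : f (S t) ≥ F - F * Real.exp (3 * ε - 1) := by linarith
  calc f (S t) ≥ F - F * Real.exp (3 * ε - 1) := this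
    _ ≥ F - F * ((1 + 4 * ε * (Real.exp 1 - 1)) / Real.exp 1) := by linarith
    _ = (1 - 4 * ε) * (1 - 1 / Real.exp 1) * F := by linarith [halg]
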